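/- In the setting of the decomposition $v = P + \rho N$ with $|N| = 1$ a.e., $N \cdot D_\alpha P = 0$ a.e. for all $\alpha$, if additionally $\rho \geq 0$ a.e. and $DP : DN \geq 0$ a.e. (Frobenius inner product), then $|DP|^2 + |D\rho|^2 \leq |Dv|^2$ a.e. -/

import Mathlib

open MeasureTheory Filter Metric Set
open scoped InnerProductSpace ENNReal Pointwise Topology

/-- If `f` is constant on a set `T`, `x` is a Lebesgue density point of `T`, and `f` is
differentiable at `x` with derivative `L`, then `L = 0`. -/
lemma aux_deriv_zero {E F : Type*} [NormedAddCommGroup E] [NormedSpace ℝ E]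
    [MeasurableSpace E] [BorelSpace E] [FiniteDimensional ℝ E]
    (μ : Measure E) [μ.IsAddHaarMeasure]
    [NormedAddCommGroup F] [NormedSpace ℝ F]
    {T : Set E} {x : E}
    (hx : Tendsto (fun r => μ (T ∩ closedBall x r) / μ (closedBall x r)) (𝓝[>] 0) (𝓝 1))
    {f : E → F} {L : E →L[ℝ] F} (hL : HasFDerivAt f L x)
    (hT : ∀ y ∈ T, f y = f x) : L = 0 := by
  by_contra hL0
  obtain ⟨u, hu⟩ : ∃ u, L u ≠ 0 := by
    by_contra h
    push_neg at h
    exact hL0 (ContinuousLinearMap.ext fun u => by simp [h u])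
  have hu0 : u ≠ 0 := fun h => hu (by simp [h])
  have hcpos : 0 < ‖L u‖ := norm_pos_iff.2 hu
  have hn : (0:ℝ) < ‖u‖ := norm_pos_iff.2 hu0
  set ε : ℝ := ‖L u‖ / (2 * ‖u‖) with hε
  have hεpos : 0 < ε := div_pos hcpos (by linarith)
  set C : Set E := {z | ε * ‖z‖ < ‖L z‖} with hC
  have hCopen : IsOpen C :=
    isOpen_lt (by fun_prop) (L.continuous.norm)
  -- a point of `C ∩ ball 0 1`
  have hmem : (2 * ‖u‖)⁻¹ • u ∈ C ∩ ball (0 : E) 1 := by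
    have h2u : (0:ℝ) < 2 * ‖u‖ := by linarith
    have e1 : ‖L ((2 * ‖u‖)⁻¹ • u)‖ = (2 * ‖u‖)⁻¹ * ‖L u‖ := by
      rw [L.map_smul, norm_smul, Real.norm_eq_abs, abs_of_pos (inv_pos.2 h2u)]
    have e2 : ‖(2 * ‖u‖)⁻¹ • u‖ = (2 * ‖u‖)⁻¹ * ‖u‖ := by
      rw [norm_smul, Real.norm_eq_abs, abs_of_pos (inv_pos.2 h2u)]
    have hhalf : (2 * ‖u‖)⁻¹ * ‖u‖ = 1 / 2 := by
      field_simp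
    have heps : (2 * ‖u‖)⁻¹ * ‖L u‖ = ε := by
      rw [hε, div_eq_inv_mul]
    constructor
    · show ε * ‖(2 * ‖u‖)⁻¹ • u‖ < ‖L ((2 * ‖u‖)⁻¹ • u)‖
      rw [e1, e2, hhalf, heps]
      linarith
    · simp only [mem_ball, dist_zero_right, e2, hhalf]
      norm_num
  set A : ℝ≥0∞ := μ (C ∩ ball (0 : E) 1) with hA
  set B : ℝ≥0∞ := μ (ball (0 : E) 1) with hB
  have hApos : 0 < A := (hCopen.inter isOpen_ball).measure_pos μ ⟨_, hmem⟩
  have hB0 : B ≠ 0 := (measure_ball_pos μ 0 one_pos).ne'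
  have hBtop : B ≠ ⊤ := measure_ball_lt_top.ne
  set δ : ℝ≥0∞ := A / B with hδ
  have hδ0 : δ ≠ 0 := (ENNReal.div_pos hApos.ne' hBtop).ne'
  have h1δ : (1:ℝ≥0∞) - δ < 1 := ENNReal.sub_lt_self ENNReal.one_ne_top one_ne_zero hδ0
  -- the little-o estimate
  have hlo : ∀ᶠ y in 𝓝 x, ‖f y - f x - L (y - x)‖ ≤ ε * ‖y - x‖ :=
    hL.isLittleO.def hεpos
  obtain ⟨r₀, hr₀pos, hball⟩ := Metric.eventually_nhds_iff_ball.1 hlo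
  set d := Module.finrank ℝ E with hd
  -- main estimate
  have hest : ∀ r : ℝ, r ∈ Set.Ioo (0:ℝ) r₀ →
      μ (T ∩ closedBall x r) / μ (closedBall x r) ≤ 1 - δ := by
    intro r hr
    obtain ⟨hrpos, hrlt⟩ := hr
    set W : Set E := x +ᵥ (C ∩ ball (0 : E) r) with hW
    have hWsub : W ⊆ closedBall x r := by
      rintro - ⟨z, ⟨hzC, hzball⟩, rfl⟩
      simp only [vadd_eq_add, mem_closedBall]
      rw [dist_comm, dist_eq_norm]
      simpa using (mem_ball_zero_iff.1 hzball).le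
    have hTsub : T ∩ closedBall x r ⊆ closedBall x r \ W := by
      rintro y ⟨hyT, hycb⟩
      refine ⟨hycb, ?_⟩
      rintro ⟨z, ⟨hzC, hzball⟩, rfl⟩
      have hyb : (x + z : E) ∈ ball x r₀ := by
        simp only [mem_ball, dist_comm, dist_eq_norm]
        simpa using lt_trans (mem_ball_zero_iff.1 hzball) hrlt
      have hyT' : (x + z : E) ∈ T := by simpa [vadd_eq_add] using hyT
      have h3 := hball _ hyb
      rw [hT _ hyT'] at h3
      simp only [add_sub_cancel_left, sub_self, zero_sub, norm_neg] at h3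
      exact absurd h3 (not_le.2 hzC)
    have hWmeas : MeasurableSet W := by
      have : IsOpen W := by
        rw [hW]
        exact (hCopen.inter isOpen_ball).vadd x
      exact this.measurableSet
    have hμW : μ W = ENNReal.ofReal (r ^ d) * A := by
      have hscale : C ∩ ball (0 : E) r = r • (C ∩ ball (0 : E) 1) := by
        ext z
        rw [mem_smul_set_iff_inv_smul_mem₀ hrpos.ne']
        constructor
        · rintro ⟨hzC, hzb⟩
          refine ⟨?_, ?_⟩
          · show ε * ‖r⁻¹ • z‖ < ‖L (r⁻¹ • z)‖
            rw [L.map_smul, norm_smul, norm_smul, Real.norm_eq_abs,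
              abs_of_pos (inv_pos.2 hrpos), ← mul_assoc, mul_comm ε r⁻¹, mul_assoc]
            exact (mul_lt_mul_iff_right₀ (inv_pos.2 hrpos)).2 hzC
          · rw [mem_ball_zero_iff, norm_smul, Real.norm_eq_abs,
              abs_of_pos (inv_pos.2 hrpos)]
            rw [inv_mul_lt_iff₀ hrpos, mul_one]
            exact mem_ball_zero_iff.1 hzb
        · rintro ⟨hzC, hzb⟩
          refine ⟨?_, ?_⟩
          · have : ε * ‖r⁻¹ • z‖ < ‖L (r⁻¹ • z)‖ := hzC
            rw [L.map_smul, norm_smul, norm_smul, Real.norm_eq_abs,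
              abs_of_pos (inv_pos.2 hrpos), ← mul_assoc, mul_comm ε r⁻¹, mul_assoc] at this
            exact (mul_lt_mul_iff_right₀ (inv_pos.2 hrpos)).1 this
          · rw [mem_ball_zero_iff, norm_smul, Real.norm_eq_abs,
              abs_of_pos (inv_pos.2 hrpos), inv_mul_lt_iff₀ hrpos, mul_one] at hzb
            exact mem_ball_zero_iff.2 hzb
      rw [hW, measure_vadd, hscale, Measure.addHaar_smul_of_nonneg μ hrpos.le]
    have hμcb : μ (closedBall x r) = ENNReal.ofReal (r ^ d) * B :=
      Measure.addHaar_closedBall μ x hrpos.le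
    set k : ℝ≥0∞ := ENNReal.ofReal (r ^ d) with hk
    have hk0 : k ≠ 0 := by
      simp only [hk, ne_eq, ENNReal.ofReal_eq_zero, not_le]
      positivity
    have hktop : k ≠ ⊤ := ENNReal.ofReal_ne_top
    have hμdiff : μ (T ∩ closedBall x r) ≤ k * B - k * A := by
      calc μ (T ∩ closedBall x r) ≤ μ (closedBall x r \ W) := measure_mono hTsub
        _ = μ (closedBall x r) - μ W :=
            measure_diff hWsub hWmeas.nullMeasurableSet
              (lt_of_le_of_lt (measure_mono hWsub) measure_closedBall_lt_top).ne
        _ = k * B - k * A := by rw [hμcb, hμW]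
    calc μ (T ∩ closedBall x r) / μ (closedBall x r)
        ≤ (k * B - k * A) / (k * B) := by
          rw [hμcb]
          exact ENNReal.div_le_div_right hμdiff _
      _ = (k * (B - A)) / (k * B) := by
          rw [ENNReal.mul_sub (fun _ _ => hktop)]
      _ = (B - A) / B := ENNReal.mul_div_mul_left _ _ hk0 hktop
      _ = 1 - δ := by
          rw [ENNReal.sub_div (fun _ _ => hB0), ENNReal.div_self hB0 hBtop, hδ]
  have h1 : ∀ᶠ r in 𝓝[>] (0:ℝ), 1 - δ < μ (T ∩ closedBall x r) / μ (closedBall x r) :=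
    hx.eventually (eventually_gt_nhds h1δ)
  have h2 : ∀ᶠ r in 𝓝[>] (0:ℝ), r ∈ Set.Ioo (0:ℝ) r₀ :=
    Ioo_mem_nhdsGT_of_mem ⟨le_refl (0:ℝ), hr₀pos⟩
  obtain ⟨r, hr1, hr2⟩ := (h1.and h2).exists
  exact absurd (hest r hr2) (not_le.2 hr1)

set_option maxHeartbeats 1000000 in
/-- If `v = P + ρ N` with `|N| = 1` a.e., `N ⟂ D_α P` a.e., `ρ ≥ 0` a.e., and the
Frobenius product `DP : DN ≥ 0` a.e., then `|DP|² + |Dρ|² ≤ |Dv|²` a.e. -/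
theorem stmt_4 {n m : ℕ} (S : Set (EuclideanSpace ℝ (Fin n))) (hS : MeasurableSet S)
    (v P N : EuclideanSpace ℝ (Fin n) → EuclideanSpace ℝ (Fin m))
    (ρ : EuclideanSpace ℝ (Fin n) → ℝ)
    (Dv DP DN : EuclideanSpace ℝ (Fin n) →
      (EuclideanSpace ℝ (Fin n) →L[ℝ] EuclideanSpace ℝ (Fin m)))
    (Dρ : EuclideanSpace ℝ (Fin n) → (EuclideanSpace ℝ (Fin n) →L[ℝ] ℝ))
    (hdiff : ∀ᵐ x ∂volume, x ∈ S → HasFDerivAt v (Dv x) x ∧ HasFDerivAt P (DP x) x ∧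
      HasFDerivAt N (DN x) x ∧ HasFDerivAt ρ (Dρ x) x)
    (hdecomp : ∀ᵐ x ∂volume, x ∈ S → v x = P x + ρ x • N x)
    (hN : ∀ᵐ x ∂volume, x ∈ S → ‖N x‖ = 1)
    (horth : ∀ᵐ x ∂volume, x ∈ S → ∀ α : Fin n,
      ⟪N x, DP x (EuclideanSpace.single α 1)⟫_ℝ = 0)
    (hρ : ∀ᵐ x ∂volume, x ∈ S → 0 ≤ ρ x)
    (hcross : ∀ᵐ x ∂volume, x ∈ S →
      0 ≤ ∑ α : Fin n,
        ⟪DP x (EuclideanSpace.single α 1), DN x (EuclideanSpace.single α 1)⟫_ℝ) :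
    ∀ᵐ x ∂volume, x ∈ S →
      ∑ α : Fin n, ‖DP x (EuclideanSpace.single α 1)‖ ^ 2 +
        ∑ α : Fin n, (Dρ x (EuclideanSpace.single α 1)) ^ 2 ≤
      ∑ α : Fin n, ‖Dv x (EuclideanSpace.single α 1)‖ ^ 2 := by
  classical
  -- the pointwise-condition bad set is null
  have hae2 : ∀ᵐ x ∂volume, x ∈ S → (v x = P x + ρ x • N x ∧ ‖N x‖ = 1) := by
    filter_upwards [hdecomp, hN] with x h1 h2 hx
    exact ⟨h1 hx, h2 hx⟩
  set Bad : Set (EuclideanSpace ℝ (Fin n)) :=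
    {x | x ∈ S ∧ ¬ (v x = P x + ρ x • N x ∧ ‖N x‖ = 1)} with hBadDef
  have hBad : volume Bad = 0 := by
    rw [ae_iff] at hae2
    have : Bad = {x | ¬ (x ∈ S → (v x = P x + ρ x • N x ∧ ‖N x‖ = 1))} := by
      ext x; simp [hBadDef, Classical.not_imp]
    rwa [this]
  set T : Set (EuclideanSpace ℝ (Fin n)) := S \ toMeasurable volume Bad with hTDef
  have hTmeas : MeasurableSet T := hS.diff (measurableSet_toMeasurable _ _)
  have hTprop : ∀ y ∈ T, v y = P y + ρ y • N y ∧ ‖N y‖ = 1 := by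
    intro y hy
    by_contra h
    exact hy.2 (subset_toMeasurable _ _ ⟨hy.1, h⟩)
  have hST : ∀ᵐ x ∂volume, x ∈ S → x ∈ T := by
    have h0 : volume (toMeasurable volume Bad) = 0 := by rwa [measure_toMeasurable]
    have h1 : ∀ᵐ x ∂volume, x ∉ toMeasurable volume Bad :=
      measure_eq_zero_iff_ae_notMem.1 h0
    filter_upwards [h1] with x hx hxS
    exact ⟨hxS, hx⟩
  have hdens : ∀ᵐ x ∂volume, x ∈ T →
      Filter.Tendsto (fun r => volume (T ∩ Metric.closedBall x r) /
        volume (Metric.closedBall x r)) (nhdsWithin 0 (Set.Ioi 0)) (nhds 1) := by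
    filter_upwards [Besicovitch.ae_tendsto_measure_inter_div_of_measurableSet volume hTmeas]
      with x hx hxT
    rwa [Set.indicator_of_mem hxT] at hx
  filter_upwards [hdiff, horth, hρ, hcross, hST, hdens]
    with x hdiff' horth' hρ' hcross' hST' hdens' hxS
  obtain ⟨hv, hP, hN', hρd⟩ := hdiff' hxS
  have hxT : x ∈ T := hST' hxS
  have hdensx := hdens' hxT
  -- identify Dv
  have hsmul := hρd.smul hN'
  have hg : HasFDerivAt (fun y => v y - (P y + ρ y • N y))
      (Dv x - (DP x + (ρ x • DN x + (Dρ x).smulRight (N x)))) x := hv.sub (hP.add hsmul)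
  have hgT : ∀ y ∈ T, v y - (P y + ρ y • N y) = v x - (P x + ρ x • N x) := by
    intro y hy
    rw [(hTprop y hy).1, (hTprop x hxT).1]
    simp
  have hDv : Dv x = DP x + (ρ x • DN x + (Dρ x).smulRight (N x)) := by
    have h := aux_deriv_zero volume hdensx hg hgT
    rwa [sub_eq_zero] at h
  -- N ⟂ DN
  have hNDN : ∀ w, ⟪N x, DN x w⟫_ℝ = 0 := by
    have hh := hN'.inner ℝ hN'
    have hhT : ∀ y ∈ T, ⟪N y, N y⟫_ℝ = ⟪N x, N x⟫_ℝ := by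
      intro y hy
      rw [real_inner_self_eq_norm_sq, real_inner_self_eq_norm_sq,
        (hTprop y hy).2, (hTprop x hxT).2]
    have hzero := aux_deriv_zero volume hdensx hh hhT
    intro w
    have h3 := congrArg (fun (L : EuclideanSpace ℝ (Fin n) →L[ℝ] ℝ) => L w) hzero
    simp only [ContinuousLinearMap.comp_apply, ContinuousLinearMap.prod_apply,
      fderivInnerCLM_apply, ContinuousLinearMap.zero_apply,
      real_inner_comm (DN x w) (N x)] at h3
    rw [real_inner_comm]
    linarith
  -- pointwise computation
  have hNx1 : ‖N x‖ = 1 := (hTprop x hxT).2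
  have happ : ∀ α : Fin n, Dv x (EuclideanSpace.single α 1) =
      (DP x (EuclideanSpace.single α 1) + ρ x • DN x (EuclideanSpace.single α 1)) +
        (Dρ x (EuclideanSpace.single α 1)) • N x := by
    intro α
    rw [hDv]
    simp [add_assoc]
  have hnorm : ∀ α : Fin n, ‖Dv x (EuclideanSpace.single α 1)‖ ^ 2 =
      ‖DP x (EuclideanSpace.single α 1)‖ ^ 2 +
        2 * ρ x * ⟪DP x (EuclideanSpace.single α 1), DN x (EuclideanSpace.single α 1)⟫_ℝ +
        (ρ x) ^ 2 * ‖DN x (EuclideanSpace.single α 1)‖ ^ 2 +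
        (Dρ x (EuclideanSpace.single α 1)) ^ 2 := by
    intro α
    set a := DP x (EuclideanSpace.single α 1)
    set b := DN x (EuclideanSpace.single α 1)
    set t := Dρ x (EuclideanSpace.single α 1)
    have horthα : ⟪a, N x⟫_ℝ = 0 := by
      rw [real_inner_comm]; exact horth' hxS α
    have hbN : ⟪b, N x⟫_ℝ = 0 := by
      rw [real_inner_comm]; exact hNDN _
    rw [happ α, norm_add_sq_real, norm_add_sq_real]
    simp only [inner_add_left, real_inner_smul_left, real_inner_smul_right, horthα, hbN,
      norm_smul, Real.norm_eq_abs, hNx1, mul_pow, sq_abs, mul_zero, mul_one, add_zero, zero_add]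
    rw [show ⟪DN x (EuclideanSpace.single α 1), N x⟫_ℝ = 0 from hbN,
      show ⟪DP x (EuclideanSpace.single α 1), N x⟫_ℝ = 0 from horthα]
    ring
  have hsum : ∑ α : Fin n, ‖Dv x (EuclideanSpace.single α 1)‖ ^ 2 =
      (∑ α : Fin n, ‖DP x (EuclideanSpace.single α 1)‖ ^ 2) +
        2 * ρ x * (∑ α : Fin n,
          ⟪DP x (EuclideanSpace.single α 1), DN x (EuclideanSpace.single α 1)⟫_ℝ) +
        (ρ x) ^ 2 * (∑ α : Fin n, ‖DN x (EuclideanSpace.single α 1)‖ ^ 2) +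
        ∑ α : Fin n, (Dρ x (EuclideanSpace.single α 1)) ^ 2 := by
    rw [Finset.sum_congr rfl (fun α _ => hnorm α)]
    rw [Finset.sum_add_distrib, Finset.sum_add_distrib, Finset.sum_add_distrib,
      ← Finset.mul_sum, ← Finset.mul_sum]
  rw [hsum]
  have h1 : 0 ≤ 2 * ρ x * (∑ α : Fin n,
      ⟪DP x (EuclideanSpace.single α 1), DN x (EuclideanSpace.single α 1)⟫_ℝ) :=
    mul_nonneg (by linarith [hρ' hxS]) (hcross' hxS)
  have h2 : 0 ≤ (ρ x) ^ 2 * (∑ α : Fin n, ‖DN x (EuclideanSpace.single α 1)‖ ^ 2) :=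
    mul_nonneg (sq_nonneg _) (Finset.sum_nonneg fun α _ => pow_nonneg (norm_nonneg _) 2)
  linarith
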